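/- Let t̄ ∈ (0,1) and let r > 0 be such that (t̄ − r, t̄ + r) ⊂ (0,1). Then ∫_{(0,1)²} 1_{{|y(x) − t̄| < r and ∂₁y(x) > 0}} · |∂₁y(x)| dx = −(2/π)·[cos(arcsin(t̄+r)) − cos(arcsin(t̄−r))] − (2/π)·(t̄−r)·[arcsin(t̄+r) − arcsin(t̄−r)] + 2r·(1 − (2/π)·arcsin(t̄+r)). -/

import Mathlib

open Real MeasureTheory Filter Set

/-- `y(x₁,x₂) = sin(π x₁) sin(π x₂)`. -/
noncomputable def ybar (x : ℝ × ℝ) : ℝ := Real.sin (π * x.1) * Real.sin (π * x.2)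

/-- `∂₁ y (x₁,x₂) = π cos(π x₁) sin(π x₂)`. -/
noncomputable def d1y (x : ℝ × ℝ) : ℝ := π * Real.cos (π * x.1) * Real.sin (π * x.2)

lemma sinmono : MonotoneOn Real.sin (Set.Icc (-(π/2)) (π/2)) :=
  Real.strictMonoOn_sin.monotoneOn

lemma hd_sin (s x : ℝ) : HasDerivAt (fun y => Real.sin (π*y) * s) (π * Real.cos (π*x) * s) x := by
  have h1 : HasDerivAt (fun y : ℝ => π * y) π x := by
    simpa using (hasDerivAt_id x).const_mul π
  have h2 := ((Real.hasDerivAt_sin (π*x)).comp x h1).mul_const s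
  exact h2.congr_deriv (by ring)

lemma inner_int (tbar r : ℝ) (hr : 0 < r) (hA : 0 ≤ tbar - r) (hB : tbar + r ≤ 1)
    (s : ℝ) (hs0 : 0 < s) (hs1 : s ≤ 1) :
    (∫ x in Set.Ioo (0:ℝ) 1,
      (if |Real.sin (π * x) * s - tbar| < r ∧ 0 < π * Real.cos (π * x) * s
        then |π * Real.cos (π * x) * s| else 0))
      = max 0 (min (tbar + r) s - (tbar - r)) := by
  set α := tbar - r with hαdef
  set β := tbar + r with hβdef
  have hαβ : α < β := by simp [hαdef, hβdef]; linarith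
  have hpi : (0:ℝ) < π := Real.pi_pos
  have habs : ∀ v : ℝ, |v - tbar| < r ↔ α < v ∧ v < β := by
    intro v
    rw [abs_sub_lt_iff]
    constructor <;> rintro ⟨h1, h2⟩ <;> constructor <;> [skip; skip; skip; skip] <;>
      simp [hαdef, hβdef] at * <;> linarith
  by_cases hsα : s ≤ α
  · have hz : ∀ x ∈ Set.Ioo (0:ℝ) 1,
        (if |Real.sin (π * x) * s - tbar| < r ∧ 0 < π * Real.cos (π * x) * s
          then |π * Real.cos (π * x) * s| else 0) = 0 := by
      intro x hx
      rw [if_neg]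
      rintro ⟨h1, h2⟩
      rw [habs] at h1
      have hsin1 : Real.sin (π * x) ≤ 1 := Real.sin_le_one _
      have : Real.sin (π * x) * s ≤ s := by nlinarith
      linarith [h1.1]
    rw [MeasureTheory.setIntegral_congr_fun measurableSet_Ioo hz]
    have h1 : min β s = s := min_eq_right (hsα.trans hαβ.le)
    rw [MeasureTheory.integral_zero, h1, max_eq_left (by linarith)]
  · push_neg at hsα
    set a := Real.arcsin (α / s) / π with hadef
    set b := Real.arcsin (β / s) / π with hbdef
    have hαs0 : 0 ≤ α / s := div_nonneg hA hs0.le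
    have hαs1 : α / s < 1 := (div_lt_one hs0).mpr hsα
    have harc_a_mem : Real.arcsin (α / s) ∈ Set.Icc (-(π/2)) (π/2) :=
      ⟨Real.neg_pi_div_two_le_arcsin _, Real.arcsin_le_pi_div_two _⟩
    have harc_a_lt : Real.arcsin (α / s) < π / 2 := Real.arcsin_lt_pi_div_two.mpr hαs1
    have harc_a_nonneg : 0 ≤ Real.arcsin (α / s) := Real.arcsin_nonneg.mpr hαs0
    have harc_b_le : Real.arcsin (β / s) ≤ π / 2 := Real.arcsin_le_pi_div_two _
    have hdivlt : α / s < β / s := by gcongr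
    have hab : Real.arcsin (α / s) < Real.arcsin (β / s) := by
      by_cases hβs : β / s ≤ 1
      · exact Real.strictMonoOn_arcsin ⟨by linarith, by linarith⟩ ⟨by linarith, hβs⟩ hdivlt
      · push_neg at hβs
        rw [Real.arcsin_of_one_le hβs.le]
        exact harc_a_lt
    have ha0 : 0 ≤ a := div_nonneg harc_a_nonneg hpi.le
    have hb12 : b ≤ 1 / 2 := by
      rw [hbdef, div_le_div_iff₀ hpi (by norm_num)]
      linarith
    have haltb : a < b := by
      rw [hadef, hbdef]
      gcongr
    have hkey : ∀ x ∈ Set.Ioo (0:ℝ) 1,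
        ((|Real.sin (π * x) * s - tbar| < r ∧ 0 < π * Real.cos (π * x) * s) ↔ x ∈ Set.Ioo a b) := by
      intro x hx
      obtain ⟨hx0, hx1⟩ := hx
      rw [habs]
      constructor
      · rintro ⟨⟨h1, h2⟩, h3⟩
        have hcos : 0 < Real.cos (π * x) := by
          by_contra hcon
          push_neg at hcon
          nlinarith [mul_nonneg (mul_nonneg hpi.le (neg_nonneg.mpr hcon)) hs0.le]
        have hxlt : π * x < π / 2 := by
          by_contra hcon
          push_neg at hcon
          have : Real.cos (π * x) ≤ 0 :=
            Real.cos_nonpos_of_pi_div_two_le_of_le hcon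
              (by linarith [mul_lt_mul_of_pos_left hx1 hpi])
          linarith
        have hsinx : Real.sin (π * x) ≤ 1 := Real.sin_le_one _
        constructor
        · have h1' : α / s < Real.sin (π * x) := (div_lt_iff₀ hs0).mpr h1
          have hmono := Real.strictMonoOn_arcsin ⟨by linarith, by linarith⟩
            ⟨by linarith [Real.neg_one_le_sin (π*x)], hsinx⟩ h1'
          rw [Real.arcsin_sin (by linarith [mul_pos hpi hx0]) hxlt.le] at hmono
          rw [hadef, div_lt_iff₀ hpi]
          linarith
        · have h2' : Real.sin (π * x) < β / s := (lt_div_iff₀ hs0).mpr h2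
          by_cases hβs : β / s ≤ 1
          · have hmono := Real.strictMonoOn_arcsin
              ⟨by linarith [Real.neg_one_le_sin (π*x)], hsinx⟩ ⟨by linarith, hβs⟩ h2'
            rw [Real.arcsin_sin (by linarith [mul_pos hpi hx0]) hxlt.le] at hmono
            rw [hbdef, lt_div_iff₀ hpi]
            linarith
          · push_neg at hβs
            rw [hbdef, Real.arcsin_of_one_le hβs.le, lt_div_iff₀ hpi]
            linarith
      · rintro ⟨hax, hxb⟩
        have hxπ2 : π * x < π / 2 := by
          have hx12 : x < 1/2 := lt_of_lt_of_le hxb hb12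
          linarith [mul_lt_mul_of_pos_left hx12 hpi]
        have hx2pos : 0 < π * x := by positivity
        have hcos : 0 < Real.cos (π * x) :=
          Real.cos_pos_of_mem_Ioo ⟨by linarith [mul_pos hpi hx0], hxπ2⟩
        have hsmem : π * x ∈ Set.Icc (-(π/2)) (π/2) :=
          ⟨by linarith [mul_pos hpi hx0], hxπ2.le⟩
        refine ⟨⟨?_, ?_⟩, by positivity⟩
        · have harc : Real.arcsin (α / s) < π * x := by
            rw [hadef, div_lt_iff₀ hpi] at hax
            linarith
          have hs2 := Real.strictMonoOn_sin harc_a_mem hsmem harc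
          rw [Real.sin_arcsin (by linarith) hαs1.le] at hs2
          exact (div_lt_iff₀ hs0).mp hs2
        · by_cases hβs : β / s ≤ 1
          · have harcb : π * x < Real.arcsin (β / s) := by
              rw [hbdef, lt_div_iff₀ hpi] at hxb
              linarith
            have hbmem : Real.arcsin (β/s) ∈ Set.Icc (-(π/2)) (π/2) :=
              ⟨Real.neg_pi_div_two_le_arcsin _, harc_b_le⟩
            have hs3 := Real.strictMonoOn_sin hsmem hbmem harcb
            rw [Real.sin_arcsin (by linarith) hβs] at hs3
            exact (lt_div_iff₀ hs0).mp hs3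
          · push_neg at hβs
            have hsin1 : Real.sin (π * x) < 1 := by
              have := Real.strictMonoOn_sin hsmem ⟨by linarith, le_refl _⟩ hxπ2
              rwa [Real.sin_pi_div_two] at this
            have hsβ : s < β := by
              rw [lt_div_iff₀ hs0, one_mul] at hβs
              exact hβs
            nlinarith
    have heq : Set.EqOn
        (fun x => if |Real.sin (π * x) * s - tbar| < r ∧ 0 < π * Real.cos (π * x) * s
          then |π * Real.cos (π * x) * s| else 0)
        ((Set.Ioo a b).indicator (fun x => π * Real.cos (π * x) * s)) (Set.Ioo (0:ℝ) 1) := by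
      intro x hx
      by_cases hm : x ∈ Set.Ioo a b
      · simp only [if_pos ((hkey x hx).mpr hm), Set.indicator_of_mem hm]
        exact abs_of_pos (((hkey x hx).mpr hm)).2
      · simp only [if_neg (fun hc => hm ((hkey x hx).mp hc)), Set.indicator_of_notMem hm]
    rw [MeasureTheory.setIntegral_congr_fun measurableSet_Ioo heq,
        MeasureTheory.setIntegral_indicator measurableSet_Ioo,
        Set.inter_eq_self_of_subset_right (Set.Ioo_subset_Ioo ha0 (by linarith : b ≤ 1)),
        ← MeasureTheory.integral_Ioc_eq_integral_Ioo,
        ← intervalIntegral.integral_of_le haltb.le]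
    have hftc : ∫ y in a..b, π * Real.cos (π * y) * s
        = Real.sin (π * b) * s - Real.sin (π * a) * s := by
      exact intervalIntegral.integral_eq_sub_of_hasDerivAt
        (f := fun y => Real.sin (π * y) * s) (fun y _ => hd_sin s y)
        (by apply Continuous.intervalIntegrable; fun_prop)
    have hπa : π * a = Real.arcsin (α / s) := by
      rw [hadef]; field_simp
    have hπb : π * b = Real.arcsin (β / s) := by
      rw [hbdef]; field_simp
    have hsa : Real.sin (π * a) * s = α := by
      rw [hπa, Real.sin_arcsin (by linarith) hαs1.le]
      field_simp
    have hsb : Real.sin (π * b) * s = min β s := by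
      rw [hπb]
      by_cases hβs : β / s ≤ 1
      · rw [Real.sin_arcsin (by linarith) hβs, min_eq_left ((div_le_one hs0).mp hβs)]
        field_simp
      · push_neg at hβs
        have hsβ : s ≤ β := by
          rw [lt_div_iff₀ hs0, one_mul] at hβs
          exact hβs.le
        rw [Real.arcsin_of_one_le hβs.le, Real.sin_pi_div_two, one_mul, min_eq_right hsβ]
    rw [hftc, hsa, hsb, max_eq_right (by simp [le_sub_iff_add_le]; constructor <;> linarith)]



lemma sinmono' : MonotoneOn Real.sin (Set.Icc (-(π/2)) (π/2)) :=

  Real.strictMonoOn_sin.monotoneOn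



lemma sin_pi_flip (x : ℝ) : Real.sin (π * (1 - x)) = Real.sin (π * x) := by

  rw [show π * (1 - x) = π - π * x by ring, Real.sin_pi_sub]



lemma hd_anti (al : ℝ) (x : ℝ) :

    HasDerivAt (fun y => -Real.cos (π*y)/π - al*y) (Real.sin (π*x) - al) x := by

  have h1 : HasDerivAt (fun y : ℝ => π * y) π x := by

    simpa using (hasDerivAt_id x).const_mul π

  have h2 := (((Real.hasDerivAt_cos (π*x)).comp x h1).neg.div_const π).sub

    ((hasDerivAt_id x).const_mul al)

  exact h2.congr_deriv (by field_simp)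



lemma outer_int (tbar r : ℝ) (hr : 0 < r) (hA : 0 ≤ tbar - r) (hB : tbar + r ≤ 1) :

    (∫ x in Set.Ioo (0:ℝ) 1, max 0 (min (tbar + r) (Real.sin (π * x)) - (tbar - r)))

      = -(2 / π) * (Real.cos (Real.arcsin (tbar + r)) - Real.cos (Real.arcsin (tbar - r)))

        - (2 / π) * (tbar - r) * (Real.arcsin (tbar + r) - Real.arcsin (tbar - r))

        + 2 * r * (1 - 2 / π * Real.arcsin (tbar + r)) := by

  set α := tbar - r with hαdef

  set β := tbar + r with hβdef

  have hαβ : α < β := by rw [hαdef, hβdef]; linarith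

  have hpi : (0:ℝ) < π := Real.pi_pos

  set A := Real.arcsin α / π with hAdef

  set B := Real.arcsin β / π with hBdef

  have harcA_nonneg : 0 ≤ Real.arcsin α := Real.arcsin_nonneg.mpr hA

  have harcB_le : Real.arcsin β ≤ π / 2 := Real.arcsin_le_pi_div_two _

  have hab : Real.arcsin α < Real.arcsin β :=

    Real.strictMonoOn_arcsin ⟨by linarith, by linarith⟩ ⟨by linarith, hB⟩ hαβ

  have hπA : π * A = Real.arcsin α := by rw [hAdef]; field_simp

  have hπB : π * B = Real.arcsin β := by rw [hBdef]; field_simp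

  have hA0 : 0 ≤ A := div_nonneg harcA_nonneg hpi.le

  have hAB : A < B := by rw [hAdef, hBdef]; gcongr

  have hB12 : B ≤ 1/2 := by

    rw [hBdef, div_le_div_iff₀ hpi (by norm_num)]

    linarith

  have hsinA : Real.sin (π * A) = α := by

    rw [hπA]; exact Real.sin_arcsin (by linarith) (by linarith)

  have hsinB : Real.sin (π * B) = β := by

    rw [hπB]; exact Real.sin_arcsin (by linarith) hB

  have hmemA : π * A ∈ Set.Icc (-(π/2)) (π/2) := by

    rw [hπA]

    exact ⟨Real.neg_pi_div_two_le_arcsin _, Real.arcsin_le_pi_div_two _⟩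

  have hmemB : π * B ∈ Set.Icc (-(π/2)) (π/2) := by

    rw [hπB]

    exact ⟨Real.neg_pi_div_two_le_arcsin _, harcB_le⟩

  -- pointwise bounds

  have fact_low : ∀ x ∈ Set.Icc (0:ℝ) A, Real.sin (π * x) ≤ α := by

    intro x ⟨h1, h2⟩

    have hx : π * x ∈ Set.Icc (-(π/2)) (π/2) := by

      constructor

      · have := mul_nonneg hpi.le h1; linarith

      · calc π * x ≤ π * A := by gcongr

          _ ≤ π/2 := hmemA.2

    calc Real.sin (π * x) ≤ Real.sin (π * A) := sinmono' hx hmemA (by gcongr)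

      _ = α := hsinA

  have fact_mid : ∀ x ∈ Set.Icc A B, α ≤ Real.sin (π * x) ∧ Real.sin (π * x) ≤ β := by

    intro x ⟨h1, h2⟩

    have hx : π * x ∈ Set.Icc (-(π/2)) (π/2) := by

      constructor

      · have := mul_le_mul_of_nonneg_left h1 hpi.le; linarith [hmemA.1]

      · calc π * x ≤ π * B := by gcongr

          _ ≤ π/2 := hmemB.2

    constructor

    · calc α = Real.sin (π * A) := hsinA.symm

        _ ≤ Real.sin (π * x) := sinmono' hmemA hx (by gcongr)

    · calc Real.sin (π * x) ≤ Real.sin (π * B) := sinmono' hx hmemB (by gcongr)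

        _ = β := hsinB

  have fact_high : ∀ x ∈ Set.Icc B (1 - B), β ≤ Real.sin (π * x) := by

    intro x ⟨h1, h2⟩

    by_cases hx12 : x ≤ 1/2

    · have hx : π * x ∈ Set.Icc (-(π/2)) (π/2) := by

        constructor

        · have := mul_le_mul_of_nonneg_left h1 hpi.le; linarith [hmemB.1]

        · calc π * x ≤ π * (1/2) := by gcongr

            _ = π/2 := by ring

      calc β = Real.sin (π * B) := hsinB.symm

        _ ≤ Real.sin (π * x) := sinmono' hmemB hx (by gcongr)

    · push_neg at hx12

      have hy1 : B ≤ 1 - x := by linarith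

      have hy : π * (1-x) ∈ Set.Icc (-(π/2)) (π/2) := by

        constructor

        · have := mul_le_mul_of_nonneg_left hy1 hpi.le

          linarith [hmemB.1]

        · calc π * (1-x) ≤ π * (1/2) := by gcongr; linarith

            _ = π/2 := by ring

      rw [(sin_pi_flip x).symm]

      calc β = Real.sin (π * B) := hsinB.symm

        _ ≤ Real.sin (π * (1-x)) := sinmono' hmemB hy (by gcongr)

  have hcont : Continuous (fun x : ℝ => max 0 (min β (Real.sin (π*x)) - α)) := by

    fun_prop

  have hii : ∀ u v : ℝ,

      IntervalIntegrable (fun x : ℝ => max 0 (min β (Real.sin (π*x)) - α)) volume u v :=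

    fun u v => hcont.intervalIntegrable u v

  rw [← MeasureTheory.integral_Ioc_eq_integral_Ioo,

      ← intervalIntegral.integral_of_le (by norm_num : (0:ℝ) ≤ 1)]

  have e1 := (intervalIntegral.integral_add_adjacent_intervals (hii 0 A) (hii A 1)).symm

  have e2 := (intervalIntegral.integral_add_adjacent_intervals (hii A B) (hii B 1)).symm

  have e3 := (intervalIntegral.integral_add_adjacent_intervals (hii B (1-B)) (hii (1-B) 1)).symm

  have e4 := (intervalIntegral.integral_add_adjacent_intervals (hii (1-B) (1-A)) (hii (1-A) 1)).symm

  rw [e1, e2, e3, e4]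

  -- piece 1

  have p1 : (∫ x in (0:ℝ)..A, max 0 (min β (Real.sin (π*x)) - α)) = 0 := by

    rw [intervalIntegral.integral_congr (g := fun _ => (0:ℝ))

      (by

        intro x hx

        rw [Set.uIcc_of_le hA0] at hx

        have h := fact_low x hx

        simp only

        rw [max_eq_left]

        have : min β (Real.sin (π*x)) ≤ α := le_trans (min_le_right _ _) h

        linarith)]

    simp

  -- piece 5

  have p5 : (∫ x in (1-A:ℝ)..1, max 0 (min β (Real.sin (π*x)) - α)) = 0 := by

    rw [intervalIntegral.integral_congr (g := fun _ => (0:ℝ))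

      (by

        intro x hx

        rw [Set.uIcc_of_le (by linarith : (1-A:ℝ) ≤ 1)] at hx

        obtain ⟨h1, h2⟩ := hx

        have hy : 1 - x ∈ Set.Icc (0:ℝ) A := ⟨by linarith, by linarith⟩

        have h := fact_low (1-x) hy

        rw [sin_pi_flip] at h

        simp only

        rw [max_eq_left]

        have : min β (Real.sin (π*x)) ≤ α := le_trans (min_le_right _ _) h

        linarith)]

    simp

  -- piece 2

  have p2 : (∫ x in A..B, max 0 (min β (Real.sin (π*x)) - α))

      = (-Real.cos (π*B)/π - α*B) - (-Real.cos (π*A)/π - α*A) := by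

    rw [intervalIntegral.integral_congr (g := fun x => Real.sin (π*x) - α)

      (by

        intro x hx

        rw [Set.uIcc_of_le hAB.le] at hx

        obtain ⟨h1, h2⟩ := fact_mid x hx

        simp only

        rw [min_eq_right h2, max_eq_right (by linarith)])]

    exact intervalIntegral.integral_eq_sub_of_hasDerivAt

      (f := fun y => -Real.cos (π*y)/π - α*y) (fun y _ => hd_anti α y)

      (by apply Continuous.intervalIntegrable; fun_prop)

  -- piece 4

  have p4 : (∫ x in (1-B:ℝ)..(1-A), max 0 (min β (Real.sin (π*x)) - α))

      = (-Real.cos (π*(1-A))/π - α*(1-A)) - (-Real.cos (π*(1-B))/π - α*(1-B)) := by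

    rw [intervalIntegral.integral_congr (g := fun x => Real.sin (π*x) - α)

      (by

        intro x hx

        rw [Set.uIcc_of_le (by linarith : (1-B:ℝ) ≤ 1-A)] at hx

        obtain ⟨hx1, hx2⟩ := hx

        have hy : 1 - x ∈ Set.Icc A B := ⟨by linarith, by linarith⟩

        obtain ⟨h1, h2⟩ := fact_mid (1-x) hy

        rw [sin_pi_flip] at h1 h2

        simp only

        rw [min_eq_right h2, max_eq_right (by linarith)])]

    exact intervalIntegral.integral_eq_sub_of_hasDerivAt

      (f := fun y => -Real.cos (π*y)/π - α*y) (fun y _ => hd_anti α y)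

      (by apply Continuous.intervalIntegrable; fun_prop)

  -- piece 3

  have p3 : (∫ x in B..(1-B), max 0 (min β (Real.sin (π*x)) - α))

      = ((1-B) - B) * (β - α) := by

    rw [intervalIntegral.integral_congr (g := fun _ => β - α)

      (by

        intro x hx

        rw [Set.uIcc_of_le (by linarith : B ≤ (1-B:ℝ))] at hx

        have h := fact_high x hx

        simp only

        rw [min_eq_left h, max_eq_right (by linarith)])]

    rw [intervalIntegral.integral_const, smul_eq_mul]

  rw [p1, p2, p3, p4, p5]

  rw [show Real.cos (π*(1-A)) = -Real.cos (π*A) by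

        rw [show π*(1-A) = π - π*A by ring, Real.cos_pi_sub],

      show Real.cos (π*(1-B)) = -Real.cos (π*B) by

        rw [show π*(1-B) = π - π*B by ring, Real.cos_pi_sub],

      ← hπA, ← hπB]

  have hβα : β - α = 2*r := by rw [hαdef, hβdef]; ring

  rw [hβα, hαdef]

  field_simp

  ring

/-- Let `t̄ ∈ (0,1)` and `r > 0` with `(t̄ − r, t̄ + r) ⊂ (0,1)`. Then
`∫_{(0,1)²} 1_{|y−t̄|<r, ∂₁y>0} |∂₁y| dx
  = −(2/π)(cos(arcsin(t̄+r)) − cos(arcsin(t̄−r)))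
    − (2/π)(t̄−r)(arcsin(t̄+r) − arcsin(t̄−r)) + 2r(1 − (2/π) arcsin(t̄+r))`. -/
theorem stmt6 (tbar r : ℝ) (ht : tbar ∈ Set.Ioo (0:ℝ) 1) (hr : 0 < r)
    (hsub : Set.Ioo (tbar - r) (tbar + r) ⊆ Set.Ioo (0:ℝ) 1) :
    (∫ x in Set.Ioo (0:ℝ) 1 ×ˢ Set.Ioo (0:ℝ) 1,
        (if |ybar x - tbar| < r ∧ 0 < d1y x then |d1y x| else 0))
      = -(2 / π) * (Real.cos (Real.arcsin (tbar + r)) - Real.cos (Real.arcsin (tbar - r)))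
        - (2 / π) * (tbar - r) * (Real.arcsin (tbar + r) - Real.arcsin (tbar - r))
        + 2 * r * (1 - 2 / π * Real.arcsin (tbar + r)) := by
  have hpi : (0:ℝ) < π := Real.pi_pos
  rw [Set.Ioo_subset_Ioo_iff (by linarith : tbar - r < tbar + r)] at hsub
  obtain ⟨hA, hB⟩ := hsub
  set F : ℝ × ℝ → ℝ := fun x => if |ybar x - tbar| < r ∧ 0 < d1y x then |d1y x| else 0
    with hFdef
  have hyc : Continuous ybar := by unfold ybar; fun_prop
  have hdc : Continuous d1y := by unfold d1y; fun_prop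
  have hSmeas : MeasurableSet {x : ℝ × ℝ | |ybar x - tbar| < r ∧ 0 < d1y x} := by
    have h : {x : ℝ × ℝ | |ybar x - tbar| < r ∧ 0 < d1y x}
        = {x | |ybar x - tbar| < r} ∩ {x | 0 < d1y x} := rfl
    rw [h]
    exact ((isOpen_lt (by fun_prop) continuous_const).inter
      (isOpen_lt continuous_const hdc)).measurableSet
  have hFmeas : Measurable F := by
    rw [hFdef]
    exact Measurable.ite hSmeas hdc.abs.measurable measurable_const
  have hFbound : ∀ x, ‖F x‖ ≤ π := by
    intro x
    rw [hFdef]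
    simp only [Real.norm_eq_abs]
    split
    · rw [abs_abs]
      calc |d1y x| = π * (|Real.cos (π*x.1)| * |Real.sin (π*x.2)|) := by
            rw [d1y, abs_mul, abs_mul, abs_of_pos hpi]; ring
        _ ≤ π * (1*1) := by
            gcongr
            exacts [Real.abs_cos_le_one _, Real.abs_sin_le_one _]
        _ = π := by ring
    · simp [hpi.le]
  have hInt : IntegrableOn F (Set.Ioo (0:ℝ) 1 ×ˢ Set.Ioo (0:ℝ) 1) volume := by
    apply Measure.integrableOn_of_bounded (M := π)
    · rw [Measure.volume_eq_prod, Measure.prod_prod]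
      simp [Real.volume_Ioo]
    · exact hFmeas.aestronglyMeasurable
    · exact Filter.Eventually.of_forall hFbound
  have h1 : (volume : Measure (ℝ×ℝ)).restrict (Set.Ioo (0:ℝ) 1 ×ˢ Set.Ioo (0:ℝ) 1)
      = (volume.restrict (Set.Ioo (0:ℝ) 1)).prod (volume.restrict (Set.Ioo (0:ℝ) 1)) := by
    rw [Measure.volume_eq_prod, Measure.prod_restrict]
  have hfub : (∫ x in Set.Ioo (0:ℝ) 1 ×ˢ Set.Ioo (0:ℝ) 1, F x)
      = ∫ x₂ in Set.Ioo (0:ℝ) 1, ∫ x₁ in Set.Ioo (0:ℝ) 1, F (x₁, x₂) := by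
    rw [h1]
    exact integral_prod_symm F (by rw [← h1]; exact hInt)
  rw [hfub]
  have hinner : ∀ x₂ ∈ Set.Ioo (0:ℝ) 1, (∫ x₁ in Set.Ioo (0:ℝ) 1, F (x₁, x₂))
      = max 0 (min (tbar+r) (Real.sin (π * x₂)) - (tbar - r)) := by
    intro x₂ hx₂
    have hs0 : 0 < Real.sin (π * x₂) :=
      Real.sin_pos_of_pos_of_lt_pi (mul_pos hpi hx₂.1)
        (by linarith [mul_lt_mul_of_pos_left hx₂.2 hpi])
    have hs1 : Real.sin (π * x₂) ≤ 1 := Real.sin_le_one _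
    rw [← inner_int tbar r hr hA hB (Real.sin (π * x₂)) hs0 hs1]
    apply MeasureTheory.setIntegral_congr_fun measurableSet_Ioo
    intro x₁ _
    simp only [hFdef, ybar, d1y]
    exact if_congr Iff.rfl rfl rfl
  rw [MeasureTheory.setIntegral_congr_fun measurableSet_Ioo hinner]
  exact outer_int tbar r hr hA hB
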